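/- Let α, β be nonzero complex numbers. With B_i(α) the Burau matrix (identity except block [[1-α,α],[1,0]] in rows/columns i,i+1) and T_i(β) as above (identity except block [[0,β^{-1}],[β,0]]), the mixed virtual braid relation B_i(α)·T_{i+1}(β)·T_i(β) = T_{i+1}(β)·T_i(β)·B_{i+1}(α) holds for all 1 ≤ i ≤ n-2. -/

import Mathlib

noncomputable def burauB (n : ℕ) (α : ℂ) (i : ℕ) : Matrix (Fin n) (Fin n) ℂ :=
  Matrix.of fun k l =>
    if k.val = i ∧ l.val = i then 1 - α
    else if k.val = i ∧ l.val = i + 1 then α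
    else if k.val = i + 1 ∧ l.val = i then 1
    else if k.val = i + 1 ∧ l.val = i + 1 then 0
    else if k = l then 1 else 0

noncomputable def permT (n : ℕ) (β : ℂ) (i : ℕ) : Matrix (Fin n) (Fin n) ℂ :=
  Matrix.of fun k l =>
    if k.val = i ∧ l.val = i then 0
    else if k.val = i ∧ l.val = i + 1 then β⁻¹
    else if k.val = i + 1 ∧ l.val = i then β
    else if k.val = i + 1 ∧ l.val = i + 1 then 0
    else if k = l then 1 else 0

open Matrix in
lemma burauB_decomp (n : ℕ) (α : ℂ) (i : ℕ) (h1 : i < n) (h2 : i + 1 < n) :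
    burauB n α i = 1 + (-α) • Matrix.single ⟨i, h1⟩ ⟨i, h1⟩ (1:ℂ)
      + α • Matrix.single ⟨i, h1⟩ ⟨i+1, h2⟩ (1:ℂ)
      + Matrix.single ⟨i+1, h2⟩ ⟨i, h1⟩ (1:ℂ)
      + (-1 : ℂ) • Matrix.single ⟨i+1, h2⟩ ⟨i+1, h2⟩ (1:ℂ) := by
  ext k l
  simp only [burauB, Matrix.of_apply, Matrix.add_apply, Matrix.one_apply, Matrix.smul_apply,
    Matrix.single, Fin.ext_iff, Fin.mk_val, smul_eq_mul]
  split_ifs <;> (first | omega | ring)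

open Matrix in
lemma permT_decomp (n : ℕ) (β : ℂ) (i : ℕ) (h1 : i < n) (h2 : i + 1 < n) :
    permT n β i = 1 + (-1 : ℂ) • Matrix.single ⟨i, h1⟩ ⟨i, h1⟩ (1:ℂ)
      + β⁻¹ • Matrix.single ⟨i, h1⟩ ⟨i+1, h2⟩ (1:ℂ)
      + β • Matrix.single ⟨i+1, h2⟩ ⟨i, h1⟩ (1:ℂ)
      + (-1 : ℂ) • Matrix.single ⟨i+1, h2⟩ ⟨i+1, h2⟩ (1:ℂ) := by
  ext k l
  simp only [permT, Matrix.of_apply, Matrix.add_apply, Matrix.one_apply, Matrix.smul_apply,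
    Matrix.single, Fin.ext_iff, Fin.mk_val, smul_eq_mul]
  split_ifs <;> (first | omega | ring)

set_option maxHeartbeats 2000000 in
theorem mixed_virtual_relation (n : ℕ) (α β : ℂ) (hα : α ≠ 0) (hβ : β ≠ 0)
    (i : ℕ) (h : i + 2 < n) :
    burauB n α i * permT n β (i + 1) * permT n β i =
      permT n β (i + 1) * permT n β i * burauB n α (i + 1) := by
  have ha : i < n := by omega
  have hb : i + 1 < n := by omega
  have hc : i + 2 < n := by omega
  have hab : (⟨i, ha⟩ : Fin n) ≠ ⟨i+1, hb⟩ := by simp [Fin.ext_iff]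
  have hba : (⟨i+1, hb⟩ : Fin n) ≠ ⟨i, ha⟩ := hab.symm
  have hbc : (⟨i+1, hb⟩ : Fin n) ≠ ⟨i+2, hc⟩ := by simp [Fin.ext_iff]
  have hcb : (⟨i+2, hc⟩ : Fin n) ≠ ⟨i+1, hb⟩ := hbc.symm
  have hac : (⟨i, ha⟩ : Fin n) ≠ ⟨i+2, hc⟩ := by simp [Fin.ext_iff]
  have hca : (⟨i+2, hc⟩ : Fin n) ≠ ⟨i, ha⟩ := hac.symm
  have e1 : (1:ℕ) + 1 = 2 := rfl
  rw [burauB_decomp n α i ha hb, burauB_decomp n α (i+1) hb hc,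
    permT_decomp n β i ha hb, permT_decomp n β (i+1) hb hc]
  simp only [show i+1+1 = i+2 from rfl]
  simp only [Matrix.add_mul, Matrix.mul_add, Matrix.one_mul, Matrix.mul_one,
    smul_mul_assoc, Matrix.mul_smul,
    Matrix.single_mul_single_same,
    Matrix.single_mul_single_of_ne, hab, hba, hbc, hcb, hac, hca, ne_eq,
    not_false_eq_true,
    smul_zero, smul_smul, one_mul, mul_one, add_zero, zero_add]
  module
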